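/- In the single-step mean-field model, given that the current empirical state distribution is z ∈ Δ_n(X) and all subsystems apply the prescription γ : X → U, the distribution of the next empirical distribution Z' is the same for every configuration x ∈ Xⁿ with empirical distribution z. Equivalently, for any two tuples x, x̃ ∈ Xⁿ having the same empirical distribution z, the random vectors (f(z, x^i, γ(x^i), W^i))_{i=1}^n and (f(z, x̃^i, γ(x̃^i), W^i))_{i=1}^n induce the same distribution on the empirical distribution of their components. -/

import Mathlib

open scoped ENNReal

/-- Empirical distribution (mean field) of a tuple of `n` points in a finite set `X`. -/
noncomputable def emp {X : Type*} [Fintype X] [DecidableEq X] {n : ℕ} (x : Fin n → X) :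
    X → ℝ :=
  fun a => ((Finset.univ.filter fun i => x i = a).card : ℝ) / n

theorem count_ofFn' {X : Type*} [DecidableEq X] {n : ℕ} (x : Fin n → X) (a : X) :
    (List.ofFn x).count a = (Finset.univ.filter fun i => x i = a).card := by
  rw [List.ofFn_eq_map, List.count_eq_countP, List.countP_map]
  have : (Finset.univ.filter fun i => x i = a).card
      = ((List.finRange n).filter fun i => x i == a).length := by
    rfl
  rw [this, List.countP_eq_length_filter]
  rfl

theorem emp_comp_perm {X : Type*} [Fintype X] [DecidableEq X] {n : ℕ}
    (y : Fin n → X) (σ : Equiv.Perm (Fin n)) : emp (y ∘ σ) = emp y := by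
  funext a
  unfold emp
  rw [← count_ofFn', ← count_ofFn', (Equiv.Perm.ofFn_comp_perm σ y).count_eq]

theorem exists_perm_of_emp_eq {X : Type*} [Fintype X] [DecidableEq X] {n : ℕ} (hn : 1 ≤ n)
    (x xt : Fin n → X) (h : emp x = emp xt) :
    ∃ σ : Equiv.Perm (Fin n), xt = x ∘ σ := by
  letI : LinearOrder X := LinearOrder.lift' (Fintype.equivFin X) (Fintype.equivFin X).injective
  have hcount : ∀ a, (List.ofFn x).count a = (List.ofFn xt).count a := by
    intro a
    have := congrFun h a
    unfold emp at this
    rw [count_ofFn', count_ofFn']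
    have hn' : (n : ℝ) ≠ 0 := by positivity
    field_simp at this
    exact_mod_cast this
  have hperm : (List.ofFn x).Perm (List.ofFn xt) := List.perm_iff_count.2 hcount
  have h1 : (x ∘ Tuple.sort x) = (xt ∘ Tuple.sort xt) := by
    apply List.ofFn_injective
    exact List.Perm.eq_of_sortedLE
      (Tuple.monotone_sort x).sortedLE_ofFn
      (Tuple.monotone_sort xt).sortedLE_ofFn
      (((Equiv.Perm.ofFn_comp_perm _ x).trans hperm).trans
        (Equiv.Perm.ofFn_comp_perm _ xt).symm)
  refine ⟨(Tuple.sort xt).symm.trans (Tuple.sort x), ?_⟩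
  funext i
  have := congrFun h1 ((Tuple.sort xt).symm i)
  simpa using this.symm

theorem map_comp_perm_eq {W : Type*} [Fintype W] {n : ℕ}
    (ν : W → ℝ≥0∞) (μ : PMF (Fin n → W))
    (hiid : ∀ w : Fin n → W, μ w = ∏ i, ν (w i)) (τ : Equiv.Perm (Fin n)) :
    μ.map (fun w => w ∘ τ) = μ := by
  ext v
  rw [PMF.map_apply]
  rw [tsum_eq_single (v ∘ τ.symm) ?_]
  · have : v = (v ∘ τ.symm) ∘ τ := by funext i; simp
    rw [if_pos this, hiid, hiid]
    exact Equiv.prod_comp τ.symm fun i => ν (v i)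
  · intro w hw
    rw [if_neg]
    intro hv
    apply hw
    funext i
    have := congrFun hv (τ.symm i)
    simpa using this.symm

/-- Single-step mean-field model: if two configurations `x, x̃ ∈ Xⁿ` have the same
empirical distribution `z`, then under i.i.d. noises `W¹,…,Wⁿ` (with common law `ν`)
and a common prescription `γ`, the next empirical distributions
`emp (f(z, xⁱ, γ(xⁱ), Wⁱ))ᵢ` and `emp (f(z, x̃ⁱ, γ(x̃ⁱ), Wⁱ))ᵢ` have the same
distribution. -/
theorem next_mean_field_law_well_defined {X U W : Type*}
    [Fintype X] [DecidableEq X] [Fintype U] [Fintype W] [DecidableEq W]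
    {n : ℕ} (hn : 1 ≤ n)
    (f : (X → ℝ) → X → U → W → X) (γ : X → U)
    (ν : W → ℝ≥0∞) (μ : PMF (Fin n → W))
    (hiid : ∀ w : Fin n → W, μ w = ∏ i, ν (w i))
    (z : X → ℝ) (x xt : Fin n → X)
    (hx : emp x = z) (hxt : emp xt = z) :
    μ.map (fun w => emp (fun i => f z (x i) (γ (x i)) (w i))) =
      μ.map (fun w => emp (fun i => f z (xt i) (γ (xt i)) (w i))) := by
  obtain ⟨σ, hσ⟩ := exists_perm_of_emp_eq hn x xt (hx.trans hxt.symm)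
  set G : (Fin n → W) → (X → ℝ) := fun w => emp (fun i => f z (x i) (γ (x i)) (w i)) with hG
  have key : (fun w : Fin n → W => emp (fun i => f z (xt i) (γ (xt i)) (w i)))
      = G ∘ (fun w => w ∘ σ.symm) := by
    funext w
    simp only [Function.comp, hG, hσ]
    rw [show (fun i => f z (x (σ i)) (γ (x (σ i))) (w i))
        = (fun j => f z (x j) (γ (x j)) (w (σ.symm j))) ∘ σ by
      funext i; simp]
    rw [emp_comp_perm]
  rw [key, ← PMF.map_comp, map_comp_perm_eq ν μ hiid σ.symm]
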